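/- For every x ∈ [-α,1]ⁿ, the probability distribution on Dⁿ with marginals x whose support forms a chain (with respect to the componentwise order induced by 0 ≺ 1, 0 ≺ -α) is unique. -/
import Mathlib


open Finset

/-- The three-element domain `D = {-α, 0, 1}`, abstractly. -/
inductive D3 : Type
  | neg : D3
  | zero : D3
  | one : D3
deriving DecidableEq

instance : Fintype D3 :=
  ⟨{D3.neg, D3.zero, D3.one}, by rintro (_ | _ | _) <;> simp⟩

namespace D3

/-- The embedding of `D3` into `ℝ` sending `neg ↦ -α`, `zero ↦ 0`, `one ↦ 1`. -/
def emb (α : ℝ) : D3 → ℝ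
  | neg => -α
  | zero => 0
  | one => 1

/-- The partial order `0 ≺ 1`, `0 ≺ -α`, with `1` and `-α` incomparable. -/
instance : PartialOrder D3 where
  le x y := x = y ∨ x = zero
  le_refl x := Or.inl rfl
  le_trans x y z hxy hyz := by
    rcases hxy with rfl | rfl
    · exact hyz
    · exact Or.inr rfl
  le_antisymm x y hxy hyx := by
    rcases hxy with rfl | rfl
    · rfl
    · rcases hyx with rfl | rfl <;> rfl

/-- `∧₀` : `1 ∧₀ (-α) = (-α) ∧₀ 1 = 0`, and min w.r.t. `≺` otherwise. -/
def meet0 (x y : D3) : D3 := if x = y then x else zero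

/-- `∨₀` : `1 ∨₀ (-α) = (-α) ∨₀ 1 = 0`, and max w.r.t. `≺` otherwise. -/
def join0 (x y : D3) : D3 :=
  if x = y then x else if x = zero then y else if y = zero then x else zero

/-- `∨₁` : `1 ∨₁ (-α) = (-α) ∨₁ 1 = 1`, and max w.r.t. `≺` otherwise. -/
def join1 (x y : D3) : D3 :=
  if x = y then x else if x = zero then y else if y = zero then x else one

end D3

/-- Componentwise `∧₀` on `Dⁿ`. -/
def vmeet0 {n : ℕ} (a b : Fin n → D3) : Fin n → D3 := fun i => D3.meet0 (a i) (b i)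

/-- Componentwise `∨₀` on `Dⁿ`. -/
def vjoin0 {n : ℕ} (a b : Fin n → D3) : Fin n → D3 := fun i => D3.join0 (a i) (b i)

/-- Componentwise `∨₁` on `Dⁿ`. -/
def vjoin1 {n : ℕ} (a b : Fin n → D3) : Fin n → D3 := fun i => D3.join1 (a i) (b i)

/-- `lam` is a probability distribution on `Dⁿ`. -/
def IsDist (n : ℕ) (lam : (Fin n → D3) → ℝ) : Prop :=
  (∀ a, 0 ≤ lam a ∧ lam a ≤ 1) ∧ ∑ a : Fin n → D3, lam a = 1

/-- `lam` has marginal vector `x`, i.e. `Σ_a lam(a)·a = x` in `ℝⁿ`. -/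
def HasMarginal (α : ℝ) (n : ℕ) (lam : (Fin n → D3) → ℝ) (x : Fin n → ℝ) : Prop :=
  ∀ i, ∑ a : Fin n → D3, lam a * D3.emb α (a i) = x i

/-- The support of `lam` forms a chain w.r.t. the componentwise order on `Dⁿ`. -/
def ChainSupp (n : ℕ) (lam : (Fin n → D3) → ℝ) : Prop :=
  ∀ a b : Fin n → D3, lam a ≠ 0 → lam b ≠ 0 → a ≤ b ∨ b ≤ a

/-- The box `[-α,1]ⁿ`. -/
def Box (α : ℝ) (n : ℕ) : Set (Fin n → ℝ) := {x | ∀ i, x i ∈ Set.Icc (-α) 1}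

/-- `f : Dⁿ → ℝ` is α-bisubmodular. -/
def AlphaBisub (α : ℝ) (n : ℕ) (f : (Fin n → D3) → ℝ) : Prop :=
  ∀ a b : Fin n → D3,
    f (vmeet0 a b) + α * f (vjoin0 a b) + (1 - α) * f (vjoin1 a b) ≤ f a + f b

/-- Number of zero coordinates. -/
def zc {n : ℕ} (c : Fin n → D3) : ℕ := (Finset.univ.filter fun i => c i = D3.zero).card

/-- The convex closure `f⁻(x)`. -/
noncomputable def cClos (α : ℝ) (n : ℕ) (f : (Fin n → D3) → ℝ) (x : Fin n → ℝ) : ℝ :=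
  sInf {y | ∃ lam, IsDist n lam ∧ HasMarginal α n lam x ∧ y = ∑ a : Fin n → D3, lam a * f a}
namespace Stmt2Aux

lemma d3_le_iff (x y : D3) : x ≤ y ↔ (x = y ∨ x = D3.zero) := Iff.rfl

lemma le_iff {n : ℕ} (c a : Fin n → D3) : c ≤ a ↔ ∀ i, c i = a i ∨ c i = D3.zero := Iff.rfl

instance {n : ℕ} : DecidableRel (α := Fin n → D3) (· ≤ ·) := fun c a =>
  decidable_of_iff (∀ i, c i = a i ∨ c i = D3.zero) (le_iff c a).symm

lemma zc_lt_of_lt {n : ℕ} {c a : Fin n → D3} (h : c ≤ a) (hne : a ≠ c) : zc a < zc c := by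
  apply Finset.card_lt_card
  have hsub : (univ.filter fun i => a i = D3.zero) ⊆ (univ.filter fun i => c i = D3.zero) := by
    intro i hi
    simp only [mem_filter, mem_univ, true_and] at hi ⊢
    rcases h i with h' | h'
    · rw [h', hi]
    · exact h'
  refine ⟨hsub, fun hsub2 => hne ?_⟩
  funext i
  rcases h i with h' | h'
  · exact h'.symm
  · have : a i = D3.zero := by
      have := hsub2 (by simp [h'] : i ∈ univ.filter fun i => c i = D3.zero)
      simpa using this
    rw [this, h']

/-- Inversion: a function on `Dⁿ` is determined by its up-set sums. -/
lemma ext_of_upsums {n : ℕ} (lam mu : (Fin n → D3) → ℝ)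
    (H : ∀ c : Fin n → D3, ∑ a ∈ univ.filter (fun a => c ≤ a), lam a
            = ∑ a ∈ univ.filter (fun a => c ≤ a), mu a) : lam = mu := by
  have key : ∀ k, ∀ c : Fin n → D3, zc c = k → lam c = mu c := by
    intro k
    induction k using Nat.strong_induction_on with
    | _ k ih =>
      intro c hc
      have h1 := H c
      have hmem : c ∈ univ.filter (fun a => c ≤ a) := by simp
      rw [Finset.sum_eq_sum_sdiff_singleton_add hmem lam,
          Finset.sum_eq_sum_sdiff_singleton_add hmem mu] at h1
      have h2 : ∑ a ∈ (univ.filter (fun a => c ≤ a)) \ {c}, lam a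
              = ∑ a ∈ (univ.filter (fun a => c ≤ a)) \ {c}, mu a := by
        refine Finset.sum_congr rfl (fun a ha => ?_)
        simp only [Finset.mem_sdiff, Finset.mem_filter, Finset.mem_singleton] at ha
        exact ih (zc a) (hc ▸ zc_lt_of_lt ha.1.2 ha.2) a rfl
      linarith
  funext c
  exact key (zc c) c rfl


/-- With chain support, the up-set sum at `c ≠ 0` equals the min of coordinate fiber sums. -/
lemma upsum_eq_inf {n : ℕ} (c : Fin n → D3)
    (hc : (univ.filter fun i => c i ≠ D3.zero).Nonempty)
    (lam : (Fin n → D3) → ℝ) (hpos : ∀ a, 0 ≤ lam a) (hch : ChainSupp n lam) :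
    ∑ a ∈ univ.filter (fun a => c ≤ a), lam a
      = (univ.filter fun i => c i ≠ D3.zero).inf' hc
          (fun j => ∑ a ∈ univ.filter (fun a => a j = c j), lam a) := by
  set S := univ.filter fun i => c i ≠ D3.zero with hS
  set A : Fin n → Finset (Fin n → D3) :=
    fun j => univ.filter (fun a => lam a ≠ 0 ∧ a j = c j) with hA
  have hScoord : ∀ j ∈ S, c j ≠ D3.zero := by
    intro j hj; simpa [hS] using hj
  have htot : ∀ j ∈ S, ∀ k ∈ S, A j ⊆ A k ∨ A k ⊆ A j := by
    intro j hj k hk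
    by_contra hcon
    push_neg at hcon
    obtain ⟨hnjk, hnkj⟩ := hcon
    obtain ⟨a, haj, hank⟩ := Finset.not_subset.mp hnjk
    obtain ⟨b, hbk, hbnj⟩ := Finset.not_subset.mp hnkj
    simp only [hA, mem_filter, mem_univ, true_and] at haj hbk hank hbnj
    have hak : a k ≠ c k := fun h => hank ⟨haj.1, h⟩
    have hbj : b j ≠ c j := fun h => hbnj ⟨hbk.1, h⟩
    rcases hch a b haj.1 hbk.1 with h | h
    · rcases h j with h' | h'
      · exact hbj (h'.symm.trans haj.2)
      · exact hScoord j hj (haj.2.symm.trans h')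
    · rcases h k with h' | h'
      · exact hak (h'.symm.trans hbk.2)
      · exact hScoord k hk (hbk.2.symm.trans h')
  obtain ⟨i0, hi0S, hi0min⟩ := S.exists_min_image (fun j => (A j).card) hc
  have hmin : ∀ j ∈ S, A i0 ⊆ A j := by
    intro j hj
    rcases htot i0 hi0S j hj with h | h
    · exact h
    · have heq := Finset.eq_of_subset_of_card_le h (hi0min j hj)
      rw [heq]
  have hsum1 : ∑ a ∈ univ.filter (fun a => c ≤ a), lam a = ∑ a ∈ A i0, lam a := by
    have hAeq : A i0 = (univ.filter (fun a => c ≤ a)).filter (fun a => lam a ≠ 0) := by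
      ext a
      simp only [hA, mem_filter, mem_univ, true_and]
      constructor
      · rintro ⟨h0, hi0⟩
        refine ⟨fun i => ?_, h0⟩
        by_cases hiS : i ∈ S
        · exact Or.inl ((by
            have := hmin i hiS (by simp [hA, h0, hi0] : a ∈ A i0)
            simp only [hA, mem_filter, mem_univ, true_and] at this
            exact this.2.symm))
        · right; by_contra h; exact hiS (by simp [hS, h])
      · rintro ⟨hle, h0⟩
        refine ⟨h0, ?_⟩
        rcases hle i0 with h' | h'
        · exact h'.symm
        · exact absurd h' (hScoord i0 hi0S)
    rw [hAeq, Finset.sum_filter_ne_zero]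
  have hsub2 : ∀ j ∈ S, A j ⊆ univ.filter (fun a => a j = c j) := by
    intro j hj a ha
    simp only [hA, mem_filter, mem_univ, true_and] at ha ⊢
    exact ha.2
  have hsum2 : ∑ a ∈ A i0, lam a = ∑ a ∈ univ.filter (fun a => a i0 = c i0), lam a := by
    apply Finset.sum_subset (hsub2 i0 hi0S)
    intro a ha hna
    simp only [hA, mem_filter, mem_univ, true_and] at ha hna
    by_contra h
    exact hna ⟨h, ha⟩
  rw [hsum1, hsum2]
  apply le_antisymm
  · apply Finset.le_inf'
    intro j hj
    rw [← hsum2]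
    calc ∑ a ∈ A i0, lam a ≤ ∑ a ∈ A j, lam a :=
          Finset.sum_le_sum_of_subset_of_nonneg (hmin j hj) (fun a _ _ => hpos a)
      _ ≤ ∑ a ∈ univ.filter (fun a => a j = c j), lam a :=
          Finset.sum_le_sum_of_subset_of_nonneg (hsub2 j hj) (fun a _ _ => hpos a)
  · exact Finset.inf'_le _ hi0S

lemma marg_split {n : ℕ} (α : ℝ) (lam : (Fin n → D3) → ℝ) (i : Fin n) :
    ∑ a : Fin n → D3, lam a * D3.emb α (a i)
      = (∑ a ∈ univ.filter (fun a => a i = D3.one), lam a)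
        - α * (∑ a ∈ univ.filter (fun a => a i = D3.neg), lam a) := by
  rw [Finset.sum_filter, Finset.sum_filter, Finset.mul_sum, ← Finset.sum_sub_distrib]
  apply Finset.sum_congr rfl
  intro a _
  cases h : a i <;> simp [D3.emb, h] <;> ring

lemma PN_eq {n : ℕ} {α : ℝ} (hα : 0 < α) (lam mu : (Fin n → D3) → ℝ)
    (hl0 : ∀ a, 0 ≤ lam a) (hm0 : ∀ a, 0 ≤ mu a)
    (hlch : ChainSupp n lam) (hmch : ChainSupp n mu) (i : Fin n)
    (hmarg : ∑ a : Fin n → D3, lam a * D3.emb α (a i)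
           = ∑ a : Fin n → D3, mu a * D3.emb α (a i)) :
    (∑ a ∈ univ.filter (fun a => a i = D3.one), lam a
        = ∑ a ∈ univ.filter (fun a => a i = D3.one), mu a)
    ∧ (∑ a ∈ univ.filter (fun a => a i = D3.neg), lam a
        = ∑ a ∈ univ.filter (fun a => a i = D3.neg), mu a) := by
  rw [marg_split, marg_split] at hmarg
  set P := ∑ a ∈ univ.filter (fun a => a i = D3.one), lam a with hP
  set N := ∑ a ∈ univ.filter (fun a => a i = D3.neg), lam a with hN
  set P' := ∑ a ∈ univ.filter (fun a => a i = D3.one), mu a with hP'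
  set N' := ∑ a ∈ univ.filter (fun a => a i = D3.neg), mu a with hN'
  have hP0 : 0 ≤ P := Finset.sum_nonneg fun a _ => hl0 a
  have hN0 : 0 ≤ N := Finset.sum_nonneg fun a _ => hl0 a
  have hP'0 : 0 ≤ P' := Finset.sum_nonneg fun a _ => hm0 a
  have hN'0 : 0 ≤ N' := Finset.sum_nonneg fun a _ => hm0 a
  have key : ∀ (f : (Fin n → D3) → ℝ), (∀ a, 0 ≤ f a) → ChainSupp n f →
      (∑ a ∈ univ.filter (fun a => a i = D3.one), f a) = 0
      ∨ (∑ a ∈ univ.filter (fun a => a i = D3.neg), f a) = 0 := by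
    intro f hf hch
    by_contra hcon
    push_neg at hcon
    obtain ⟨a, _, hfa⟩ := Finset.exists_ne_zero_of_sum_ne_zero hcon.1
    obtain ⟨b, _, hfb⟩ := Finset.exists_ne_zero_of_sum_ne_zero hcon.2
    rename_i ha hb
    simp only [mem_filter, mem_univ, true_and] at ha hb
    rcases hch a b hfa hfb with h | h
    · rcases h i with h' | h' <;> simp_all
    · rcases h i with h' | h' <;> simp_all
  have hαN : 0 ≤ α * N := mul_nonneg hα.le hN0
  have hαN' : 0 ≤ α * N' := mul_nonneg hα.le hN'0
  have hkl : P = 0 ∨ N = 0 := key lam hl0 hlch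
  have hkm : P' = 0 ∨ N' = 0 := key mu hm0 hmch
  rcases hkl with h1 | h1 <;> rcases hkm with h2 | h2
  · exact ⟨by rw [h1, h2], mul_left_cancel₀ (ne_of_gt hα) (by linarith)⟩
  · have e2 : α * N' = 0 := by rw [h2, mul_zero]
    have hz : α * N = 0 := by linarith
    have hz2 : N = 0 := (mul_eq_zero.mp hz).resolve_left (ne_of_gt hα)
    exact ⟨by linarith, by rw [hz2, h2]⟩
  · have e1 : α * N = 0 := by rw [h1, mul_zero]
    have hz : α * N' = 0 := by linarith
    have hz2 : N' = 0 := (mul_eq_zero.mp hz).resolve_left (ne_of_gt hα)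
    exact ⟨by linarith, by rw [h1, hz2]⟩
  · have e1 : α * N = 0 := by rw [h1, mul_zero]
    have e2 : α * N' = 0 := by rw [h2, mul_zero]
    exact ⟨by linarith, by rw [h1, h2]⟩

end Stmt2Aux

/-- uniqueness of the chain-supported distribution with marginals `x`. -/
theorem stmt2 (α : ℝ) (hα : α ∈ Set.Ioc (0 : ℝ) 1) (n : ℕ) (x : Fin n → ℝ)
    (hx : x ∈ Box α n) (lam mu : (Fin n → D3) → ℝ)
    (hlam : IsDist n lam ∧ HasMarginal α n lam x ∧ ChainSupp n lam)
    (hmu : IsDist n mu ∧ HasMarginal α n mu x ∧ ChainSupp n mu) :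
    lam = mu := by
  obtain ⟨⟨hl01, hlsum⟩, hlmarg, hlch⟩ := hlam
  obtain ⟨⟨hm01, hmsum⟩, hmmarg, hmch⟩ := hmu
  have hl0 : ∀ a, 0 ≤ lam a := fun a => (hl01 a).1
  have hm0 : ∀ a, 0 ≤ mu a := fun a => (hm01 a).1
  apply Stmt2Aux.ext_of_upsums
  intro c
  by_cases hc : (univ.filter fun i => c i ≠ D3.zero).Nonempty
  · rw [Stmt2Aux.upsum_eq_inf c hc lam hl0 hlch, Stmt2Aux.upsum_eq_inf c hc mu hm0 hmch]
    apply Finset.inf'_congr hc rfl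
    intro j hj
    have hcj : c j ≠ D3.zero := by simpa using hj
    have hmarg : ∑ a : Fin n → D3, lam a * D3.emb α (a j)
               = ∑ a : Fin n → D3, mu a * D3.emb α (a j) := by
      rw [hlmarg j, hmmarg j]
    have hPN := Stmt2Aux.PN_eq hα.1 lam mu hl0 hm0 hlch hmch j hmarg
    cases h : c j with
    | one => simpa [h] using hPN.1
    | neg => simpa [h] using hPN.2
    | zero => exact absurd h hcj
  · have hall : ∀ a : Fin n → D3, c ≤ a := by
      intro a i
      right
      by_contra h
      exact hc ⟨i, by simp [h]⟩
    rw [Finset.filter_true_of_mem (fun a _ => hall a)]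
    rw [hlsum, hmsum]
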